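/- Let W be a discrete memoryless channel with R_cr < C, Q ∈ P(𝒳) with E_r(R,Q) > 0 for some R > R_∞, and fix r ∈ ( ∂E_o(ρ,Q)/∂ρ|_{ρ=1}, I(Q;W) ). Then Fano's exponent equals the random coding exponent: E_F(r,Q) = E_r(r,Q), where E_F(r,Q) := D( P^{ρ*_r(Q)}_{X,Y} ‖ Q×W ) is the relative entropy of the tilted joint distribution P^{ρ*_r(Q)}_{X,Y} from Q×W. -/

import Mathlib

open Real BigOperators
open scoped Classical

namespace RCB

/-- A probability distribution on a finite alphabet. -/
def IsDist {α : Type*} [Fintype α] (Q : α → ℝ) : Prop :=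
  (∀ a, 0 ≤ Q a) ∧ ∑ a, Q a = 1

/-- A discrete memoryless channel, i.e. a stochastic matrix from `X` to `Y`. -/
def IsChannel {X Y : Type*} [Fintype X] [Fintype Y] (W : X → Y → ℝ) : Prop :=
  (∀ x y, 0 ≤ W x y) ∧ ∀ x, ∑ y, W x y = 1

/-- The Gallager function `E_o(ρ, Q)`. -/
noncomputable def Eo {X Y : Type*} [Fintype X] [Fintype Y]
    (W : X → Y → ℝ) (ρ : ℝ) (Q : X → ℝ) : ℝ :=
  - Real.log (∑ y, (∑ x, Q x * W x y ^ (1 / (1 + ρ))) ^ (1 + ρ))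

/-- The random coding exponent `E_r(R, Q)` for input distribution `Q`. -/
noncomputable def ErQ {X Y : Type*} [Fintype X] [Fintype Y]
    (W : X → Y → ℝ) (R : ℝ) (Q : X → ℝ) : ℝ :=
  sSup ((fun ρ => -ρ * R + Eo W ρ Q) '' Set.Icc (0 : ℝ) 1)

/-- The random coding exponent `E_r(R)`. -/
noncomputable def Er {X Y : Type*} [Fintype X] [Fintype Y]
    (W : X → Y → ℝ) (R : ℝ) : ℝ :=
  sSup {v : ℝ | ∃ Q : X → ℝ, IsDist Q ∧ v = ErQ W R Q}

/-- The mutual information `I(Q; W)` (natural logarithm). -/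
noncomputable def MI {X Y : Type*} [Fintype X] [Fintype Y]
    (W : X → Y → ℝ) (Q : X → ℝ) : ℝ :=
  ∑ x, ∑ y, Q x * W x y * Real.log (W x y / ∑ x', Q x' * W x' y)

/-- The capacity `C = max_Q I(Q;W)`. -/
noncomputable def Capacity {X Y : Type*} [Fintype X] [Fintype Y]
    (W : X → Y → ℝ) : ℝ :=
  sSup {v : ℝ | ∃ Q : X → ℝ, IsDist Q ∧ v = MI W Q}

/-- The critical rate of the input distribution `Q`:
`R_cr(Q) = ∂E_o(ρ,Q)/∂ρ |_{ρ=1}`. -/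
noncomputable def RcrQ {X Y : Type*} [Fintype X] [Fintype Y]
    (W : X → Y → ℝ) (Q : X → ℝ) : ℝ :=
  deriv (fun ρ => Eo W ρ Q) 1

/-- The critical rate of the channel: the largest `R` with
`E_r(R) = -R + max_Q E_o(1,Q)`. -/
noncomputable def Rcr {X Y : Type*} [Fintype X] [Fintype Y]
    (W : X → Y → ℝ) : ℝ :=
  sSup {R : ℝ | Er W R = -R + sSup {v : ℝ | ∃ Q : X → ℝ, IsDist Q ∧ v = Eo W 1 Q}}

/-- The rate `R_∞ = inf {R ≥ 0 : E_SP(R) < ∞}` (finiteness of the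
sphere-packing exponent expressed as boundedness of the family of affine maps). -/
noncomputable def Rinf {X Y : Type*} [Fintype X] [Fintype Y]
    (W : X → Y → ℝ) : ℝ :=
  sInf {R : ℝ | 0 ≤ R ∧
    BddAbove {v : ℝ | ∃ (Q : X → ℝ) (ρ : ℝ), IsDist Q ∧ 0 ≤ ρ ∧ v = -ρ * R + Eo W ρ Q}}

/-- The pair `(Q, W)` is singular if `W(y|x) = W(y|z)` whenever
`Q(x)W(y|x)Q(z)W(y|z) > 0`. -/
def Singular {X Y : Type*} (W : X → Y → ℝ) (Q : X → ℝ) : Prop :=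
  ∀ x y z, 0 < Q x * W x y * (Q z * W z y) → W x y = W z y

/-- `ρ^*_R(Q) = -∂E_r(a,Q)/∂a |_{a=R}`. -/
noncomputable def rhoStarQ {X Y : Type*} [Fintype X] [Fintype Y]
    (W : X → Y → ℝ) (Q : X → ℝ) (R : ℝ) : ℝ :=
  - deriv (fun a => ErQ W a Q) R

/-- The number of messages of an `(N, R)` code: `⌈exp (N R)⌉`. -/
noncomputable def nMsgs (N : ℕ) (R : ℝ) : ℕ := ⌈Real.exp (N * R)⌉₊

/-- The `N`-fold memoryless extension of the channel `W`. -/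
noncomputable def Wn {X Y : Type*} (W : X → Y → ℝ) {N : ℕ}
    (c : Fin N → X) (y : Fin N → Y) : ℝ :=
  ∏ n, W (c n) (y n)

/-- The maximal error probability of the code `(f, φ)` over the `N`-fold
memoryless extension of `W`. -/
noncomputable def Pmax {X Y : Type*} [Fintype X] [Fintype Y] {M N : ℕ}
    (W : X → Y → ℝ) (f : Fin M → Fin N → X) (φ : (Fin N → Y) → Fin M) : ℝ :=
  ⨆ m : Fin M, ∑ y : Fin N → Y, Wn W (f m) y * (if φ y ≠ m then (1 : ℝ) else 0)

/-- The ensemble average error probability `P̄_e(Q, N, R)`: the `⌈exp (N R)⌉`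
codewords are drawn i.i.d. from `Q^N` and decoded by maximum-likelihood
decoding, ties counted as errors. -/
noncomputable def Pbar {X Y : Type*} [Fintype X] [Fintype Y]
    (W : X → Y → ℝ) (Q : X → ℝ) (N : ℕ) (R : ℝ) : ℝ :=
  ∑ c : Fin (nMsgs N R) → Fin N → X,
    (∏ m, ∏ n, Q (c m n)) *
      ((nMsgs N R : ℝ)⁻¹ *
        ∑ m, ∑ y : Fin N → Y,
          Wn W (c m) y *
            (if ∃ m', m' ≠ m ∧ Wn W (c m) y ≤ Wn W (c m') y then (1 : ℝ) else 0))

/-- The tilted output distribution `f_ρ`. -/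
noncomputable def fRho {X Y : Type*} [Fintype X] [Fintype Y]
    (W : X → Y → ℝ) (Q : X → ℝ) (ρ : ℝ) (y : Y) : ℝ :=
  (∑ x, Q x * W x y ^ (1 / (1 + ρ))) ^ (1 + ρ) /
    ∑ b, (∑ a, Q a * W a b ^ (1 / (1 + ρ))) ^ (1 + ρ)

/-- The cumulant generating function
`Λ_ρ(λ) = log E_{P_{X,Y}}[exp(λ log (f_ρ(Y)/W(Y|X)))]` with `P_{X,Y} = Q × W`. -/
noncomputable def Lam {X Y : Type*} [Fintype X] [Fintype Y]
    (W : X → Y → ℝ) (Q : X → ℝ) (ρ : ℝ) (t : ℝ) : ℝ :=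
  Real.log (∑ x, ∑ y, Q x * W x y * Real.exp (t * Real.log (fRho W Q ρ y / W x y)))

/-- `P_{X,Y,Z}(S̃_Q)` where `P_{X,Y,Z}(x,y,z) = Q(x)W(y|x)Q(z)` and
`S̃_Q = {(x,y,z) : Q(x)W(y|x)Q(z)W(y|z) > 0}`. -/
noncomputable def PStilde {X Y : Type*} [Fintype X] [Fintype Y]
    (W : X → Y → ℝ) (Q : X → ℝ) : ℝ :=
  ∑ x, ∑ y, ∑ z,
    if 0 < Q x * W x y * (Q z * W z y) then Q x * W x y * Q z else 0

/-- The bivariate cumulant generating function `Λ_{1,ρ}(v)` with respect to the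
conditional distribution `P̃_{X,Y,Z}` of `P_{X,Y,Z}` given `S̃_Q`. -/
noncomputable def Lam1 {X Y : Type*} [Fintype X] [Fintype Y]
    (W : X → Y → ℝ) (Q : X → ℝ) (ρ : ℝ) (v : ℝ × ℝ) : ℝ :=
  Real.log ((∑ x, ∑ y, ∑ z,
    if 0 < Q x * W x y * (Q z * W z y) then
      Q x * W x y * Q z *
        Real.exp (v.1 * Real.log (W x y / fRho W Q ρ y) +
          v.2 * Real.log (W z y / W x y))
    else 0) / PStilde W Q)

/-- The subdifferential of `f : ℝ → ℝ` at `R` (for convex `f`). -/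
def Subderiv (f : ℝ → ℝ) (R : ℝ) : Set ℝ :=
  {g : ℝ | ∀ x, f R + g * (x - R) ≤ f x}

/-- The tilted backward channel `P^ρ_{X|Y}`. -/
noncomputable def PXgY {X Y : Type*} [Fintype X]
    (W : X → Y → ℝ) (Q : X → ℝ) (ρ : ℝ) (x : X) (y : Y) : ℝ :=
  Q x * W x y ^ (1 / (1 + ρ)) / ∑ a, Q a * W a y ^ (1 / (1 + ρ))

/-- The tilted joint distribution `P^ρ_{X,Y}(x,y) = P^ρ_{X|Y}(x|y) P^ρ_Y(y)`. -/
noncomputable def PXY {X Y : Type*} [Fintype X] [Fintype Y]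
    (W : X → Y → ℝ) (Q : X → ℝ) (ρ : ℝ) (x : X) (y : Y) : ℝ :=
  PXgY W Q ρ x y * fRho W Q ρ y

/-- Hölder inequality for finite sums in geometric-mean form. -/
lemma holder_sum {ι : Type*} [Fintype ι] (a b : ι → ℝ) (ha : ∀ i, 0 ≤ a i)
    (hb : ∀ i, 0 ≤ b i) (θ : ℝ) (hθ0 : 0 < θ) (hθ1 : θ < 1) :
    ∑ i, (a i) ^ θ * (b i) ^ (1 - θ) ≤ (∑ i, a i) ^ θ * (∑ i, b i) ^ (1 - θ) := by
  set A := ∑ i, a i with hA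
  set B := ∑ i, b i with hB
  have hA0 : 0 ≤ A := Finset.sum_nonneg fun i _ => ha i
  have hB0 : 0 ≤ B := Finset.sum_nonneg fun i _ => hb i
  rcases eq_or_lt_of_le hA0 with h | hApos
  · have : ∀ i ∈ Finset.univ, a i = 0 := by
      intro i _
      have := (Finset.sum_eq_zero_iff_of_nonneg (fun i _ => ha i)).1 h.symm
      exact this i (Finset.mem_univ i)
    have hz : ∑ i, (a i) ^ θ * (b i) ^ (1 - θ) = 0 := by
      apply Finset.sum_eq_zero
      intro i hi
      rw [this i hi, Real.zero_rpow hθ0.ne', zero_mul]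
    rw [hz, ← h, Real.zero_rpow hθ0.ne', zero_mul]
  rcases eq_or_lt_of_le hB0 with h | hBpos
  · have : ∀ i ∈ Finset.univ, b i = 0 := by
      intro i _
      have := (Finset.sum_eq_zero_iff_of_nonneg (fun i _ => hb i)).1 h.symm
      exact this i (Finset.mem_univ i)
    have hz : ∑ i, (a i) ^ θ * (b i) ^ (1 - θ) = 0 := by
      apply Finset.sum_eq_zero
      intro i hi
      rw [this i hi, Real.zero_rpow (by linarith), mul_zero]
    rw [hz, ← h, Real.zero_rpow (by linarith), mul_zero]
  have key : ∀ i, (a i) ^ θ * (b i) ^ (1 - θ) ≤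
      A ^ θ * B ^ (1 - θ) * (θ * (a i / A) + (1 - θ) * (b i / B)) := by
    intro i
    have h1 : (a i / A) ^ θ * (b i / B) ^ (1 - θ) ≤ θ * (a i / A) + (1 - θ) * (b i / B) :=
      Real.geom_mean_le_arith_mean2_weighted hθ0.le (by linarith)
        (div_nonneg (ha i) hA0) (div_nonneg (hb i) hB0) (by ring)
    have h2 : (a i / A) ^ θ * (b i / B) ^ (1 - θ) =
        (a i) ^ θ * (b i) ^ (1 - θ) / (A ^ θ * B ^ (1 - θ)) := by
      rw [Real.div_rpow (ha i) hA0, Real.div_rpow (hb i) hB0]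
      field_simp
    have hpos : 0 < A ^ θ * B ^ (1 - θ) :=
      mul_pos (Real.rpow_pos_of_pos hApos _) (Real.rpow_pos_of_pos hBpos _)
    rw [h2] at h1
    calc (a i) ^ θ * (b i) ^ (1 - θ)
        = A ^ θ * B ^ (1 - θ) * ((a i) ^ θ * (b i) ^ (1 - θ) / (A ^ θ * B ^ (1 - θ))) := by
          field_simp
      _ ≤ A ^ θ * B ^ (1 - θ) * (θ * (a i / A) + (1 - θ) * (b i / B)) := by
          exact mul_le_mul_of_nonneg_left h1 hpos.le
  calc ∑ i, (a i) ^ θ * (b i) ^ (1 - θ)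
      ≤ ∑ i, A ^ θ * B ^ (1 - θ) * (θ * (a i / A) + (1 - θ) * (b i / B)) :=
        Finset.sum_le_sum fun i _ => key i
    _ = A ^ θ * B ^ (1 - θ) := by
        rw [← Finset.mul_sum]
        have : ∑ i, (θ * (a i / A) + (1 - θ) * (b i / B)) = 1 := by
          rw [Finset.sum_add_distrib, ← Finset.mul_sum, ← Finset.mul_sum,
            ← Finset.sum_div, ← Finset.sum_div, ← hA, ← hB,
            div_self hApos.ne', div_self hBpos.ne']
          ring
        rw [this, mul_one]


section Dev
variable {X Y : Type*} [Fintype X] [Fintype Y] (W : X → Y → ℝ) (Q : X → ℝ)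

/-- `A_y(ρ)`. -/
noncomputable def Ay (y : Y) (ρ : ℝ) : ℝ := ∑ x, Q x * W x y ^ (1 / (1 + ρ))

/-- `D_y(ρ) = ∑_x Q x W^{1/(1+ρ)} log W`. -/
noncomputable def Dy (y : Y) (ρ : ℝ) : ℝ :=
  ∑ x, Q x * W x y ^ (1 / (1 + ρ)) * Real.log (W x y)

/-- `F(ρ)`. -/
noncomputable def Fn (ρ : ℝ) : ℝ := ∑ y, (Ay W Q y ρ) ^ (1 + ρ)

/-- Formal derivative of `F`. -/
noncomputable def Fn' (ρ : ℝ) : ℝ :=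
  ∑ y, (Ay W Q y ρ) ^ (1 + ρ) *
    (Real.log (Ay W Q y ρ) + (1 + ρ) * (-(1 / (1 + ρ)) ^ 2 * Dy W Q y ρ) / Ay W Q y ρ)

lemma Eo_eq (ρ : ℝ) : Eo W ρ Q = -Real.log (Fn W Q ρ) := rfl

variable (hW : IsChannel W) (hQ : IsDist Q)
include hW hQ

lemma Ay_nonneg (y : Y) (ρ : ℝ) : 0 ≤ Ay W Q y ρ :=
  Finset.sum_nonneg fun x _ => mul_nonneg (hQ.1 x) (Real.rpow_nonneg (hW.1 x y) _)

lemma Ay_pos {y : Y} {ρ : ℝ} (hρ : -1 < ρ) (h : ∃ x, 0 < Q x ∧ 0 < W x y) :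
    0 < Ay W Q y ρ := by
  obtain ⟨x0, hq, hw⟩ := h
  have hterm : 0 < Q x0 * W x0 y ^ (1 / (1 + ρ)) :=
    mul_pos hq (Real.rpow_pos_of_pos hw _)
  refine lt_of_lt_of_le hterm ?_
  exact Finset.single_le_sum
    (fun x _ => mul_nonneg (hQ.1 x) (Real.rpow_nonneg (hW.1 x y) _)) (Finset.mem_univ x0)

lemma Ay_eq_zero {y : Y} {ρ : ℝ} (hρ : -1 < ρ) (h : ¬ ∃ x, 0 < Q x ∧ 0 < W x y) :
    Ay W Q y ρ = 0 := by
  push_neg at h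
  apply Finset.sum_eq_zero
  intro x _
  rcases eq_or_lt_of_le (hQ.1 x) with hq | hq
  · rw [← hq, zero_mul]
  · have hw : W x y = 0 := le_antisymm (h x hq) (hW.1 x y)
    have : 1 / (1 + ρ) ≠ 0 := by
      have : 0 < 1 + ρ := by linarith
      positivity
    rw [hw, Real.zero_rpow this, mul_zero]

lemma exists_pos_pair : ∃ x y, 0 < Q x ∧ 0 < W x y := by
  have hx : ∃ x, 0 < Q x := by
    by_contra h
    push_neg at h
    have : ∑ a, Q a = 0 := Finset.sum_eq_zero fun a _ => le_antisymm (h a) (hQ.1 a)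
    rw [hQ.2] at this; norm_num at this
  obtain ⟨x0, hx0⟩ := hx
  have hy : ∃ y, 0 < W x0 y := by
    by_contra h
    push_neg at h
    have : ∑ y, W x0 y = 0 := Finset.sum_eq_zero fun y _ => le_antisymm (h y) (hW.1 x0 y)
    rw [hW.2 x0] at this; norm_num at this
  obtain ⟨y0, hy0⟩ := hy
  exact ⟨x0, y0, hx0, hy0⟩

lemma Fn_pos {ρ : ℝ} (hρ : -1 < ρ) : 0 < Fn W Q ρ := by
  obtain ⟨x0, y0, hx0, hy0⟩ := exists_pos_pair W Q hW hQ
  have h1 : 0 < (Ay W Q y0 ρ) ^ (1 + ρ) :=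
    Real.rpow_pos_of_pos (Ay_pos W Q hW hQ hρ ⟨x0, hx0, hy0⟩) _
  refine lt_of_lt_of_le h1 ?_
  exact Finset.single_le_sum
    (fun y _ => Real.rpow_nonneg (Ay_nonneg W Q hW hQ y ρ) _) (Finset.mem_univ y0)

lemma Fn_zero : Fn W Q 0 = 1 := by
  unfold Fn Ay
  simp only [add_zero, div_one, Real.rpow_one]
  rw [Finset.sum_comm]
  simp only [← Finset.mul_sum]
  calc ∑ x, Q x * ∑ y, W x y = ∑ x, Q x * 1 :=
        Finset.sum_congr rfl fun x _ => by rw [hW.2 x]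
    _ = 1 := by simpa using hQ.2


lemma hasDerivAt_term (x : X) (y : Y) {ρ : ℝ} (hρ : -1 < ρ) :
    HasDerivAt (fun t => Q x * W x y ^ (1 / (1 + t)))
      (Q x * W x y ^ (1 / (1 + ρ)) * Real.log (W x y) * (-(1 / (1 + ρ)) ^ 2)) ρ := by
  have h1ρ : (0:ℝ) < 1 + ρ := by linarith
  have hs : HasDerivAt (fun t : ℝ => 1 / (1 + t)) (-1 / (1 + ρ) ^ 2) ρ := by
    simp only [one_div]
    have h : HasDerivAt (fun t : ℝ => 1 + t) 1 ρ := by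
      simpa using (hasDerivAt_id ρ).const_add 1
    exact h.inv h1ρ.ne'
  rcases eq_or_lt_of_le (hW.1 x y) with hw | hw
  · -- W x y = 0
    have hev : (fun t => Q x * W x y ^ (1 / (1 + t))) =ᶠ[nhds ρ] fun _ => 0 := by
      filter_upwards [eventually_gt_nhds (show -1 < ρ from hρ)] with t ht
      have : 1 / (1 + t) ≠ 0 := by
        have : (0:ℝ) < 1 + t := by linarith
        positivity
      rw [← hw, Real.zero_rpow this, mul_zero]
    have : HasDerivAt (fun _ : ℝ => (0:ℝ)) 0 ρ := hasDerivAt_const ρ 0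
    refine (this.congr_of_eventuallyEq hev).congr_deriv ?_
    rw [← hw, Real.zero_rpow (by positivity), mul_zero, zero_mul, zero_mul]
  · -- W x y > 0
    have hev : (fun t => Q x * W x y ^ (1 / (1 + t)))
        =ᶠ[nhds ρ] fun t => Q x * Real.exp (Real.log (W x y) * (1 / (1 + t))) := by
      filter_upwards with t
      rw [Real.rpow_def_of_pos hw]
    have hd : HasDerivAt (fun t => Q x * Real.exp (Real.log (W x y) * (1 / (1 + t))))
        (Q x * (Real.exp (Real.log (W x y) * (1 / (1 + ρ))) *
          (Real.log (W x y) * (-1 / (1 + ρ) ^ 2)))) ρ := by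
      exact ((hs.const_mul (Real.log (W x y))).exp).const_mul (Q x)
    refine (hd.congr_of_eventuallyEq hev).congr_deriv ?_
    rw [← Real.rpow_def_of_pos hw]
    have h1ρ' : (1:ℝ) + ρ ≠ 0 := h1ρ.ne'
    field_simp

lemma hasDerivAt_Ay (y : Y) {ρ : ℝ} (hρ : -1 < ρ) :
    HasDerivAt (fun t => Ay W Q y t) (-(1 / (1 + ρ)) ^ 2 * Dy W Q y ρ) ρ := by
  have := HasDerivAt.fun_sum (u := Finset.univ)
    (fun x _ => hasDerivAt_term W Q hW hQ x y hρ)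
  refine this.congr_deriv ?_
  unfold Dy
  rw [Finset.mul_sum]
  exact Finset.sum_congr rfl fun x _ => by ring

lemma hasDerivAt_Fy (y : Y) {ρ : ℝ} (hρ : -1 < ρ) :
    HasDerivAt (fun t => (Ay W Q y t) ^ (1 + t))
      ((Ay W Q y ρ) ^ (1 + ρ) *
        (Real.log (Ay W Q y ρ) + (1 + ρ) * (-(1 / (1 + ρ)) ^ 2 * Dy W Q y ρ) / Ay W Q y ρ)) ρ := by
  by_cases hS : ∃ x, 0 < Q x ∧ 0 < W x y
  · have hA : 0 < Ay W Q y ρ := Ay_pos W Q hW hQ hρ hS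
    have hcont : ContinuousAt (fun t => Ay W Q y t) ρ :=
      (hasDerivAt_Ay W Q hW hQ y hρ).continuousAt
    have hev : (fun t => (Ay W Q y t) ^ (1 + t))
        =ᶠ[nhds ρ] fun t => Real.exp ((1 + t) * Real.log (Ay W Q y t)) := by
      have hpos : ∀ᶠ t in nhds ρ, 0 < Ay W Q y t :=
        hcont.eventually (eventually_gt_nhds hA)
      filter_upwards [hpos] with t ht
      rw [Real.rpow_def_of_pos ht, mul_comm]
    have hinner : HasDerivAt (fun t => (1 + t) * Real.log (Ay W Q y t))
        (1 * Real.log (Ay W Q y ρ) +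
          (1 + ρ) * ((-(1 / (1 + ρ)) ^ 2 * Dy W Q y ρ) / Ay W Q y ρ)) ρ := by
      have h1 : HasDerivAt (fun t : ℝ => 1 + t) 1 ρ := by
        simpa using (hasDerivAt_id ρ).const_add 1
      have h2 : HasDerivAt (fun t => Real.log (Ay W Q y t))
          ((-(1 / (1 + ρ)) ^ 2 * Dy W Q y ρ) / Ay W Q y ρ) ρ :=
        (hasDerivAt_Ay W Q hW hQ y hρ).log hA.ne'
      exact h1.mul h2
    have := hinner.exp
    have hexp : Ay W Q y ρ ^ ((1:ℝ) + ρ) = Real.exp ((1 + ρ) * Real.log (Ay W Q y ρ)) := by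
      rw [Real.rpow_def_of_pos hA, mul_comm]
    refine (this.congr_of_eventuallyEq hev).congr_deriv ?_
    rw [← hexp]
    ring
  · -- Ay ≡ 0 near ρ
    have hev : (fun t => (Ay W Q y t) ^ (1 + t)) =ᶠ[nhds ρ] fun _ => 0 := by
      filter_upwards [eventually_gt_nhds (show -1 < ρ from hρ)] with t ht
      rw [Ay_eq_zero W Q hW hQ ht hS, Real.zero_rpow (by linarith)]
    have h0 : Ay W Q y ρ = 0 := Ay_eq_zero W Q hW hQ hρ hS
    have : HasDerivAt (fun _ : ℝ => (0:ℝ)) 0 ρ := hasDerivAt_const ρ 0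
    refine (this.congr_of_eventuallyEq hev).congr_deriv ?_
    rw [h0, Real.zero_rpow (by linarith), zero_mul]

lemma hasDerivAt_Fn {ρ : ℝ} (hρ : -1 < ρ) :
    HasDerivAt (fun t => Fn W Q t) (Fn' W Q ρ) ρ := by
  have := HasDerivAt.fun_sum (u := Finset.univ)
    (fun y _ => hasDerivAt_Fy W Q hW hQ y hρ)
  exact this

/-- Formal derivative of `Eo`. -/
noncomputable def Eo' (ρ : ℝ) : ℝ := -(Fn' W Q ρ / Fn W Q ρ)

lemma hasDerivAt_Eo {ρ : ℝ} (hρ : -1 < ρ) :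
    HasDerivAt (fun t => Eo W t Q) (Eo' W Q ρ) ρ := by
  have h := ((hasDerivAt_Fn W Q hW hQ hρ).log (Fn_pos W Q hW hQ hρ).ne').neg
  exact h


lemma Eo'_zero : Eo' W Q 0 = MI W Q := by
  have hFn0 : Fn W Q 0 = 1 := Fn_zero W Q hW hQ
  have hFn'0 : Fn' W Q 0 = ∑ y, (Ay W Q y 0 * Real.log (Ay W Q y 0) - Dy W Q y 0) := by
    unfold Fn'
    apply Finset.sum_congr rfl
    intro y _
    by_cases hS : ∃ x, 0 < Q x ∧ 0 < W x y
    · have hA : 0 < Ay W Q y 0 := Ay_pos W Q hW hQ (by norm_num) hS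
      rw [show ((1:ℝ) + 0) = 1 by norm_num, Real.rpow_one]
      field_simp
      ring
    · have hA : Ay W Q y 0 = 0 := Ay_eq_zero W Q hW hQ (by norm_num) hS
      have hD : Dy W Q y 0 = 0 := by
        unfold Dy
        apply Finset.sum_eq_zero
        intro x _
        rcases eq_or_lt_of_le (hQ.1 x) with hq | hq
        · rw [← hq]; ring
        · have hw : W x y = 0 := by
            by_contra hne
            exact hS ⟨x, hq, lt_of_le_of_ne (hW.1 x y) (Ne.symm hne)⟩
          rw [hw]
          simp
      rw [hA, hD]
      simp
  have hAy0 : ∀ y, Ay W Q y 0 = ∑ x', Q x' * W x' y := by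
    intro y
    unfold Ay
    apply Finset.sum_congr rfl
    intro x _
    norm_num
  have hDy0 : ∀ y, Dy W Q y 0 = ∑ x, Q x * W x y * Real.log (W x y) := by
    intro y
    unfold Dy
    apply Finset.sum_congr rfl
    intro x _
    norm_num
  unfold Eo'
  rw [hFn0, hFn'0, MI, div_one, Finset.sum_comm, neg_eq_iff_eq_neg, ← Finset.sum_neg_distrib]
  apply Finset.sum_congr rfl
  intro y _
  rw [hAy0 y, hDy0 y]
  set P := ∑ x', Q x' * W x' y with hP
  have hterm : ∀ x, Q x * W x y * Real.log (W x y / P)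
      = Q x * W x y * Real.log (W x y) - Q x * W x y * Real.log P := by
    intro x
    rcases eq_or_lt_of_le (mul_nonneg (hQ.1 x) (hW.1 x y)) with h0 | h0
    · rw [← h0]; ring
    · have hw : 0 < W x y := by
        rcases (mul_pos_iff.1 h0) with ⟨_, h⟩ | ⟨h1, _⟩
        · exact h
        · exact absurd h1 (not_lt.2 (hQ.1 x))
      have hPpos : 0 < P := by
        refine lt_of_lt_of_le h0 ?_
        exact Finset.single_le_sum
          (fun x' _ => mul_nonneg (hQ.1 x') (hW.1 x' y)) (Finset.mem_univ x)
      rw [Real.log_div hw.ne' hPpos.ne']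
      ring
  have hsum : ∑ x, Q x * W x y * Real.log (W x y / P)
      = (∑ x, Q x * W x y * Real.log (W x y)) - P * Real.log P := by
    calc ∑ x, Q x * W x y * Real.log (W x y / P)
        = ∑ x, (Q x * W x y * Real.log (W x y) - Q x * W x y * Real.log P) :=
          Finset.sum_congr rfl fun x _ => hterm x
      _ = (∑ x, Q x * W x y * Real.log (W x y)) - P * Real.log P := by
          rw [Finset.sum_sub_distrib, ← Finset.sum_mul]
  rw [hsum]
  ring


lemma Fn_holder {ρ1 ρ2 θ : ℝ} (h1 : 0 ≤ ρ1) (h2 : 0 ≤ ρ2) (hθ0 : 0 < θ) (hθ1 : θ < 1) :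
    Fn W Q (θ * ρ1 + (1 - θ) * ρ2) ≤ (Fn W Q ρ1) ^ θ * (Fn W Q ρ2) ^ (1 - θ) := by
  set u1 := 1 + ρ1 with hu1
  set u2 := 1 + ρ2 with hu2
  have hu1p : 0 < u1 := by rw [hu1]; linarith
  have hu2p : 0 < u2 := by rw [hu2]; linarith
  set u := θ * u1 + (1 - θ) * u2 with hu
  have hup : 0 < u := by
    have := mul_pos hθ0 hu1p
    have := mul_pos (by linarith : (0:ℝ) < 1 - θ) hu2p
    rw [hu]; linarith
  have huu : 1 + (θ * ρ1 + (1 - θ) * ρ2) = u := by rw [hu, hu1, hu2]; ring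
  set α := θ * u1 / u with hα
  set β := (1 - θ) * u2 / u with hβ
  have hαp : 0 < α := by positivity
  have hβp : 0 < β := by
    rw [hβ]
    have : (0:ℝ) < 1 - θ := by linarith
    positivity
  have hαβ : α + β = 1 := by rw [hα, hβ]; field_simp; linarith
  have hβ1 : β = 1 - α := by linarith
  have hexp : (1 / u1) * α + (1 / u2) * β = 1 / u := by
    rw [hα, hβ]
    field_simp
    ring
  -- Step A+B: per-y Hölder
  have stepB : ∀ y, Ay W Q y (θ * ρ1 + (1 - θ) * ρ2) ≤
      (Ay W Q y ρ1) ^ α * (Ay W Q y ρ2) ^ β := by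
    intro y
    have stepA : ∀ x, Q x * W x y ^ (1 / (1 + (θ * ρ1 + (1 - θ) * ρ2)))
        = (Q x * W x y ^ (1 / u1)) ^ α * (Q x * W x y ^ (1 / u2)) ^ β := by
      intro x
      rw [huu]
      rcases eq_or_lt_of_le (hQ.1 x) with hq | hq
      · rw [← hq]
        simp [Real.zero_rpow hαp.ne', Real.zero_rpow hβp.ne']
      rcases eq_or_lt_of_le (hW.1 x y) with hw | hw
      · rw [← hw]
        have e1 : u⁻¹ ≠ 0 := by positivity
        have e2 : u1⁻¹ ≠ 0 := by positivity
        have e3 : u2⁻¹ ≠ 0 := by positivity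
        simp only [one_div]
        rw [Real.zero_rpow e1, Real.zero_rpow e2, Real.zero_rpow e3, mul_zero,
          Real.zero_rpow hαp.ne', zero_mul]
      · rw [Real.mul_rpow hq.le (Real.rpow_nonneg (hW.1 x y) _),
          Real.mul_rpow hq.le (Real.rpow_nonneg (hW.1 x y) _),
          ← Real.rpow_mul (hW.1 x y), ← Real.rpow_mul (hW.1 x y)]
        calc Q x * W x y ^ (1 / u)
            = (Q x ^ α * Q x ^ β) * W x y ^ (1 / u1 * α + 1 / u2 * β) := by
              rw [← Real.rpow_add hq, hαβ, Real.rpow_one, hexp]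
          _ = Q x ^ α * W x y ^ (1 / u1 * α) * (Q x ^ β * W x y ^ (1 / u2 * β)) := by
              rw [Real.rpow_add hw]; ring
    calc Ay W Q y (θ * ρ1 + (1 - θ) * ρ2)
        = ∑ x, (Q x * W x y ^ (1 / u1)) ^ α * (Q x * W x y ^ (1 / u2)) ^ β :=
          Finset.sum_congr rfl fun x _ => stepA x
      _ ≤ (Ay W Q y ρ1) ^ α * (Ay W Q y ρ2) ^ β := by
          rw [hβ1]
          exact holder_sum _ _
            (fun x => mul_nonneg (hQ.1 x) (Real.rpow_nonneg (hW.1 x y) _))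
            (fun x => mul_nonneg (hQ.1 x) (Real.rpow_nonneg (hW.1 x y) _))
            α hαp (by linarith)
  -- Step C: raise to power u
  have stepC : ∀ y, (Ay W Q y (θ * ρ1 + (1 - θ) * ρ2)) ^ (1 + (θ * ρ1 + (1 - θ) * ρ2)) ≤
      ((Ay W Q y ρ1) ^ u1) ^ θ * ((Ay W Q y ρ2) ^ u2) ^ (1 - θ) := by
    intro y
    rw [huu]
    calc (Ay W Q y (θ * ρ1 + (1 - θ) * ρ2)) ^ u
        ≤ ((Ay W Q y ρ1) ^ α * (Ay W Q y ρ2) ^ β) ^ u :=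
          Real.rpow_le_rpow (Ay_nonneg W Q hW hQ _ _) (stepB y) hup.le
      _ = ((Ay W Q y ρ1) ^ u1) ^ θ * ((Ay W Q y ρ2) ^ u2) ^ (1 - θ) := by
          rw [Real.mul_rpow (Real.rpow_nonneg (Ay_nonneg W Q hW hQ _ _) _)
            (Real.rpow_nonneg (Ay_nonneg W Q hW hQ _ _) _),
            ← Real.rpow_mul (Ay_nonneg W Q hW hQ _ _),
            ← Real.rpow_mul (Ay_nonneg W Q hW hQ _ _),
            show α * u = u1 * θ by rw [hα]; field_simp,
            show β * u = u2 * (1 - θ) by rw [hβ]; field_simp,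
            Real.rpow_mul (Ay_nonneg W Q hW hQ _ _),
            Real.rpow_mul (Ay_nonneg W Q hW hQ _ _)]
  -- Step D
  calc Fn W Q (θ * ρ1 + (1 - θ) * ρ2)
      = ∑ y, (Ay W Q y (θ * ρ1 + (1 - θ) * ρ2)) ^ (1 + (θ * ρ1 + (1 - θ) * ρ2)) := rfl
    _ ≤ ∑ y, ((Ay W Q y ρ1) ^ u1) ^ θ * ((Ay W Q y ρ2) ^ u2) ^ (1 - θ) :=
        Finset.sum_le_sum fun y _ => stepC y
    _ ≤ (Fn W Q ρ1) ^ θ * (Fn W Q ρ2) ^ (1 - θ) :=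
        holder_sum _ _ (fun y => Real.rpow_nonneg (Ay_nonneg W Q hW hQ _ _) _)
          (fun y => Real.rpow_nonneg (Ay_nonneg W Q hW hQ _ _) _) θ hθ0 hθ1

lemma Eo_concave3 {ρ1 ρ2 θ : ℝ} (h1 : 0 ≤ ρ1) (h2 : 0 ≤ ρ2) (hθ0 : 0 < θ) (hθ1 : θ < 1) :
    θ * Eo W ρ1 Q + (1 - θ) * Eo W ρ2 Q ≤ Eo W (θ * ρ1 + (1 - θ) * ρ2) Q := by
  have hF1 : 0 < Fn W Q ρ1 := Fn_pos W Q hW hQ (by linarith)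
  have hF2 : 0 < Fn W Q ρ2 := Fn_pos W Q hW hQ (by linarith)
  have hFθ : 0 < Fn W Q (θ * ρ1 + (1 - θ) * ρ2) := by
    apply Fn_pos W Q hW hQ
    have := mul_nonneg hθ0.le h1
    have := mul_nonneg (by linarith : (0:ℝ) ≤ 1 - θ) h2
    linarith
  have h := Fn_holder W Q hW hQ h1 h2 hθ0 hθ1
  have hlog := Real.log_le_log hFθ h
  rw [Real.log_mul (by positivity) (by positivity),
    Real.log_rpow hF1, Real.log_rpow hF2] at hlog
  rw [Eo_eq, Eo_eq, Eo_eq]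
  linarith


omit hW hQ in
lemma fRho_eq (p : ℝ) (y : Y) : fRho W Q p y = (Ay W Q y p) ^ (1 + p) / Fn W Q p := rfl

omit hW hQ in
lemma sum_PXY_x {p : ℝ} (hp : -1 < p) (y : Y) : ∑ x, PXY W Q p x y = fRho W Q p y := by
  unfold PXY
  rw [← Finset.sum_mul]
  have hsum : ∑ x, PXgY W Q p x y = Ay W Q y p / Ay W Q y p := by
    unfold PXgY
    rw [← Finset.sum_div]
    rfl
  rw [hsum]
  rcases eq_or_ne (Ay W Q y p) 0 with h | h
  · rw [fRho_eq W Q p y, h, Real.zero_rpow (ne_of_gt (by linarith : (0:ℝ) < 1 + p))]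
    simp
  · rw [div_self h, one_mul]

lemma sum_fRho {p : ℝ} (hp : -1 < p) : ∑ y, fRho W Q p y = 1 := by
  unfold fRho
  rw [← Finset.sum_div]
  exact div_self (Fn_pos W Q hW hQ hp).ne'

lemma sum_PXY_log {p : ℝ} (hp : 0 < p) :
    ∑ x, ∑ y, PXY W Q p x y * Real.log (PXY W Q p x y / (Q x * W x y)) =
      Eo W p Q + p * (Fn' W Q p / Fn W Q p) := by
  have h1p : (0:ℝ) < 1 + p := by linarith
  set s : ℝ := 1 / (1 + p) with hsdef
  have hs0 : 0 < s := by positivity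
  have hs1 : s * (1 + p) = 1 := by rw [hsdef]; field_simp
  have hF : 0 < Fn W Q p := Fn_pos W Q hW hQ (by linarith)
  -- pointwise identity
  have star : ∀ x y, PXY W Q p x y * Real.log (PXY W Q p x y / (Q x * W x y)) =
      PXY W Q p x y * (-Real.log (Fn W Q p)) +
        p * (PXY W Q p x y * Real.log (Ay W Q y p)) -
        p * s * (PXY W Q p x y * Real.log (W x y)) := by
    intro x y
    rcases eq_or_lt_of_le (hQ.1 x) with hq | hq
    · have h0 : PXY W Q p x y = 0 := by
        unfold PXY PXgY
        rw [← hq, zero_mul, zero_div, zero_mul]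
      rw [h0]; ring
    rcases eq_or_lt_of_le (hW.1 x y) with hw | hw
    · have h0 : PXY W Q p x y = 0 := by
        unfold PXY PXgY
        rw [← hw, Real.zero_rpow (by positivity : 1/(1+p) ≠ 0), mul_zero, zero_div, zero_mul]
      rw [h0]; ring
    have hA : 0 < Ay W Q y p := Ay_pos W Q hW hQ (by linarith) ⟨x, hq, hw⟩
    have hPXYeq : PXY W Q p x y
        = Q x * W x y ^ s * ((Ay W Q y p) ^ (1 + p)) / (Ay W Q y p * Fn W Q p) := by
      unfold PXY PXgY
      rw [fRho_eq W Q p y]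
      show Q x * W x y ^ s / (Ay W Q y p) * _ = _
      field_simp
    have hApow : 0 < (Ay W Q y p) ^ (1 + p) := Real.rpow_pos_of_pos hA _
    have hWs : 0 < W x y ^ s := Real.rpow_pos_of_pos hw _
    have harg : PXY W Q p x y / (Q x * W x y)
        = (W x y ^ s / W x y) * ((Ay W Q y p) ^ (1 + p) / Ay W Q y p) * (Fn W Q p)⁻¹ := by
      rw [hPXYeq]
      field_simp
    have hlog : Real.log (PXY W Q p x y / (Q x * W x y))
        = (s * Real.log (W x y) - Real.log (W x y)) +
          ((1 + p) * Real.log (Ay W Q y p) - Real.log (Ay W Q y p)) - Real.log (Fn W Q p) := by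
      rw [harg, Real.log_mul (by positivity) (by positivity),
        Real.log_mul (by positivity) (by positivity),
        Real.log_div hWs.ne' hw.ne', Real.log_div hApow.ne' hA.ne',
        Real.log_inv, Real.log_rpow hw, Real.log_rpow hA]
      ring
    rw [hlog]
    linear_combination (PXY W Q p x y * Real.log (W x y)) * hs1
  -- sum it up
  calc ∑ x, ∑ y, PXY W Q p x y * Real.log (PXY W Q p x y / (Q x * W x y))
      = ∑ y, ∑ x, (PXY W Q p x y * (-Real.log (Fn W Q p)) +
          p * (PXY W Q p x y * Real.log (Ay W Q y p)) -
          p * s * (PXY W Q p x y * Real.log (W x y))) := by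
        rw [Finset.sum_comm]
        exact Finset.sum_congr rfl fun y _ => Finset.sum_congr rfl fun x _ => star x y
    _ = ∑ y, (fRho W Q p y * (-Real.log (Fn W Q p)) +
          p * (fRho W Q p y * Real.log (Ay W Q y p)) -
          p * s * ((Ay W Q y p) ^ (1 + p) / (Ay W Q y p * Fn W Q p) * Dy W Q y p)) := by
        apply Finset.sum_congr rfl
        intro y _
        rw [Finset.sum_sub_distrib, Finset.sum_add_distrib, ← Finset.sum_mul,
          ← Finset.mul_sum, ← Finset.mul_sum, ← Finset.sum_mul]
        have e1 : ∑ x, PXY W Q p x y = fRho W Q p y := sum_PXY_x W Q (by linarith) y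
        have e2 : ∑ x, PXY W Q p x y * Real.log (W x y)
            = (Ay W Q y p) ^ (1 + p) / (Ay W Q y p * Fn W Q p) * Dy W Q y p := by
          unfold PXY PXgY Dy
          rw [fRho_eq W Q p y, Finset.mul_sum]
          apply Finset.sum_congr rfl
          intro x _
          show Q x * W x y ^ s / (Ay W Q y p) * ((Ay W Q y p) ^ (1+p) / Fn W Q p) * _ = _
          field_simp
          ring
        rw [e1, e2]
    _ = Eo W p Q + p * (Fn' W Q p / Fn W Q p) := by
        rw [Finset.sum_sub_distrib, Finset.sum_add_distrib, ← Finset.sum_mul,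
          sum_fRho W Q hW hQ (by linarith), one_mul, Eo_eq]
        have : ∑ y, (p * (fRho W Q p y * Real.log (Ay W Q y p)) -
            p * s * ((Ay W Q y p) ^ (1 + p) / (Ay W Q y p * Fn W Q p) * Dy W Q y p))
            = p * (Fn' W Q p / Fn W Q p) := by
          unfold Fn'
          rw [Finset.sum_div, Finset.mul_sum]
          apply Finset.sum_congr rfl
          intro y _
          rw [fRho_eq W Q p y]
          rcases eq_or_ne (Ay W Q y p) 0 with h | h
          · rw [h, Real.zero_rpow (by positivity : (1:ℝ)+p ≠ 0)]
            simp
          · have hA : 0 < Ay W Q y p := lt_of_le_of_ne (Ay_nonneg W Q hW hQ y p) (Ne.symm h)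
            rw [hsdef]
            field_simp
            ring
        rw [Finset.sum_sub_distrib] at this
        linarith


end Dev


lemma exists_gt_of_hasDerivAt_pos {f : ℝ → ℝ} {a d : ℝ} (h : HasDerivAt f d a)
    (hd : 0 < d) (b : ℝ) (hab : a < b) : ∃ x, a < x ∧ x < b ∧ f a < f x := by
  have h' := hasDerivAt_iff_tendsto_slope.1 h
  have h1 : ∀ᶠ x in nhdsWithin a {a}ᶜ, 0 < slope f a x :=
    h'.eventually (eventually_gt_nhds hd)
  have hmono : nhdsWithin a (Set.Ioi a) ≤ nhdsWithin a {a}ᶜ :=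
    nhdsWithin_mono a (fun x hx => ne_of_gt hx)
  have h2 : ∀ᶠ x in nhdsWithin a (Set.Ioi a), 0 < slope f a x := h1.filter_mono hmono
  have h3 : ∀ᶠ x in nhdsWithin a (Set.Ioi a), x ∈ Set.Ioo a b :=
    Filter.eventually_of_mem (Ioo_mem_nhdsGT_of_mem ⟨le_refl a, hab⟩) (fun x hx => hx)
  obtain ⟨x, hx1, hx2⟩ := (h2.and h3).exists
  refine ⟨x, hx2.1, hx2.2, ?_⟩
  have hxa : 0 < x - a := by linarith [hx2.1]
  have := mul_pos hx1 hxa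
  rw [slope_def_field] at this
  have : 0 < f x - f a := by
    rw [div_mul_cancel₀] at this
    · linarith
    · exact hxa.ne'
  linarith

lemma exists_lt_of_hasDerivAt_neg {f : ℝ → ℝ} {a d : ℝ} (h : HasDerivAt f d a)
    (hd : d < 0) (b : ℝ) (hab : a < b) : ∃ x, a < x ∧ x < b ∧ f x < f a := by
  obtain ⟨x, h1, h2, h3⟩ := exists_gt_of_hasDerivAt_pos h.neg (by linarith) b hab
  exact ⟨x, h1, h2, by simpa using h3⟩


/-- Fano's exponent equals the random coding exponent:
`E_F(r,Q) = D(P^{ρ*_r(Q)}_{X,Y} ‖ Q×W) = E_r(r,Q)`. -/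
theorem statement18 {X Y : Type*} [Fintype X] [Fintype Y] [Nonempty X] [Nonempty Y]
    (W : X → Y → ℝ) (hW : IsChannel W) (hcr : Rcr W < Capacity W)
    (Q : X → ℝ) (hQ : IsDist Q)
    (hEr : ∃ R : ℝ, Rinf W < R ∧ 0 < ErQ W R Q)
    (r : ℝ) (hr1 : deriv (fun t => Eo W t Q) 1 < r) (hr2 : r < MI W Q)
    (p : ℝ) (hp0 : 0 ≤ p)
    (hpmax : ∀ ρ : ℝ, 0 ≤ ρ → -ρ * r + Eo W ρ Q ≤ -p * r + Eo W p Q)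
    (hpuniq : ∀ p' : ℝ, 0 ≤ p' →
      (∀ ρ : ℝ, 0 ≤ ρ → -ρ * r + Eo W ρ Q ≤ -p' * r + Eo W p' Q) → p' = p) :
    ∑ x, ∑ y, PXY W Q p x y * Real.log (PXY W Q p x y / (Q x * W x y)) =
      ErQ W r Q := by
  have hgderiv : ∀ ρ : ℝ, -1 < ρ →
      HasDerivAt (fun t => -t * r + Eo W t Q) (-r + Eo' W Q ρ) ρ := by
    intro ρ hρ
    have h1 : HasDerivAt (fun t : ℝ => -t * r) (-r) ρ := by
      simpa using ((hasDerivAt_id ρ).neg.mul_const r)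
    exact h1.add (hasDerivAt_Eo W Q hW hQ hρ)
  have hEo'1 : Eo' W Q 1 < r := by
    have hd := (hasDerivAt_Eo W Q hW hQ (by norm_num : (-1:ℝ) < 1)).deriv
    rwa [hd] at hr1
  -- p > 0
  have hppos : 0 < p := by
    rcases eq_or_lt_of_le hp0 with h0 | h
    swap
    · exact h
    exfalso
    have hd := hgderiv 0 (by norm_num)
    rw [Eo'_zero W Q hW hQ] at hd
    obtain ⟨x, hx0, hx1, hgx⟩ :=
      exists_gt_of_hasDerivAt_pos hd (by linarith) 1 (by norm_num)
    have := hpmax x hx0.le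
    rw [← h0] at this
    linarith
  -- first-order condition
  have hEo'p : Eo' W Q p = r := by
    have hlocmax : IsLocalMax (fun t => -t * r + Eo W t Q) p := by
      filter_upwards [Ioi_mem_nhds hppos] with x hx
      exact hpmax x (le_of_lt hx)
    have := hlocmax.hasDerivAt_eq_zero (hgderiv p (by linarith))
    linarith
  -- p ≤ 1
  have hple1 : p ≤ 1 := by
    by_contra hp1
    push_neg at hp1
    obtain ⟨x, hx1, hxp, hgx⟩ :=
      exists_lt_of_hasDerivAt_neg (hgderiv 1 (by norm_num)) (by linarith) p hp1
    set θ : ℝ := (p - x) / (p - 1) with hθ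
    have hp1' : 0 < p - 1 := by linarith
    have hθ0 : 0 < θ := by apply div_pos <;> linarith
    have hθ1 : θ < 1 := by rw [hθ, div_lt_one hp1']; linarith
    have hxeq : θ * 1 + (1 - θ) * p = x := by
      rw [hθ]; field_simp; ring
    have hgx' : -x * r + Eo W x Q < -1 * r + Eo W 1 Q := hgx
    have hc := Eo_concave3 W Q hW hQ (ρ1 := 1) (ρ2 := p) (θ := θ)
      (by norm_num) (by linarith) hθ0 hθ1
    rw [hxeq] at hc
    have hgp := hpmax 1 (by norm_num)
    have e1 : -x * r = θ * (-(1:ℝ) * r) + (1 - θ) * (-p * r) := by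
      rw [← hxeq]; ring
    have e2 : θ * (-1 * r + Eo W 1 Q) + (1 - θ) * (-p * r + Eo W p Q)
        ≤ -x * r + Eo W x Q := by linarith [hc, e1]
    have e3 : (1 - θ) * (-1 * r + Eo W 1 Q) ≤ (1 - θ) * (-p * r + Eo W p Q) :=
      mul_le_mul_of_nonneg_left hgp (by linarith)
    nlinarith [e2, e3, hgx']
  -- assemble
  have hsup : ErQ W r Q = -p * r + Eo W p Q := by
    apply IsGreatest.csSup_eq
    constructor
    · exact ⟨p, Set.mem_Icc.2 ⟨hp0, hple1⟩, rfl⟩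
    · rintro v ⟨ρ, hρ, rfl⟩
      exact hpmax ρ hρ.1
  rw [sum_PXY_log W Q hW hQ hppos, hsup]
  have hfr : Fn' W Q p / Fn W Q p = -r := by
    have h := hEo'p
    unfold Eo' at h
    linarith
  rw [hfr]
  ring

end RCB
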